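/- For every nonempty set S, there exists a good S-predictor on ℝ; that is, a function P assigning to each t ∈ ℝ and each f : (-∞,t) → S a value P(f) ∈ S, such that for every total function F : ℝ → S, the set {t ∈ ℝ : P(F restricted to (-∞,t)) ≠ F(t)} has Lebesgue measure zero. -/

import Mathlib

open MeasureTheory Set

section Aux

variable {S : Type*} [Nonempty S]

/-- The well-founded relation on `ℝ → S` we use. -/
noncomputable def HTrel (S : Type*) : (ℝ → S) → (ℝ → S) → Prop := WellOrderingRel

lemma HTwf (S : Type*) : WellFounded (HTrel S) :=
  (WellOrderingRel.isWellOrder).toIsWellFounded.wf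

/-- The least function agreeing with `F` on `(-∞, t)`. -/
noncomputable def HTmin (t : ℝ) (F : ℝ → S) : ℝ → S :=
  (HTwf S).min {G : ℝ → S | Set.EqOn G F (Set.Iio t)} ⟨F, fun _ _ => rfl⟩

lemma HTmin_eqOn (t : ℝ) (F : ℝ → S) : Set.EqOn (HTmin t F) F (Set.Iio t) :=
  (HTwf S).min_mem {G : ℝ → S | Set.EqOn G F (Set.Iio t)} ⟨F, fun _ _ => rfl⟩

lemma HTmin_not_lt (t : ℝ) (F : ℝ → S) {G : ℝ → S} (hG : Set.EqOn G F (Set.Iio t)) :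
    ¬ HTrel S G (HTmin t F) :=
  (HTwf S).not_lt_min {G : ℝ → S | Set.EqOn G F (Set.Iio t)} hG

lemma HTmin_congr (t : ℝ) {F G : ℝ → S} (h : Set.EqOn F G (Set.Iio t)) :
    HTmin t F = HTmin t G := by
  have hset : {H : ℝ → S | Set.EqOn H F (Set.Iio t)} =
      {H : ℝ → S | Set.EqOn H G (Set.Iio t)} := by
    ext H
    exact ⟨fun hH => hH.trans h, fun hH => hH.trans h.symm⟩
  unfold HTmin
  congr 1

/-- Strict monotonicity along errors: if the prediction is wrong at `s` and `s < t`,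
then `HTmin s F` strictly precedes `HTmin t F`. -/
lemma HTmin_lt {F : ℝ → S} {s t : ℝ} (hs : HTmin s F s ≠ F s) (hst : s < t) :
    HTrel S (HTmin s F) (HTmin t F) := by
  have hmem : Set.EqOn (HTmin t F) F (Set.Iio s) :=
    fun x hx => HTmin_eqOn t F (lt_trans hx hst)
  have hne : HTmin s F ≠ HTmin t F := by
    intro h
    apply hs
    rw [h]
    exact HTmin_eqOn t F hst
  have hnotlt : ¬ HTrel S (HTmin t F) (HTmin s F) := HTmin_not_lt s F hmem
  rcases trichotomous_of WellOrderingRel (HTmin s F) (HTmin t F) with h | h | h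
  · exact h
  · exact absurd h hne
  · exact absurd h hnotlt

end Aux

/-- **Hardin–Taylor**: for every (nonempty) set `S` there is a good `S`-predictor on `ℝ`.
An `S`-predictor is encoded as `P : ℝ → (ℝ → S) → S`, where `P t F` stands for the
prediction made from the restriction of `F` to `(-∞, t)`; accordingly we require that
`P t` depends only on values on `Iio t`.  Goodness: for every total `F : ℝ → S`, the set
of times where the prediction is wrong has Lebesgue measure zero. -/
theorem stmt_0 (S : Type*) [Nonempty S] :
    ∃ P : ℝ → (ℝ → S) → S,
      (∀ (t : ℝ) (F G : ℝ → S), Set.EqOn F G (Set.Iio t) → P t F = P t G) ∧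
      (∀ F : ℝ → S, volume {t : ℝ | P t F ≠ F t} = 0) := by
  classical
  refine ⟨fun t F => HTmin t F t, fun t F G h => by show HTmin t F t = HTmin t G t; rw [HTmin_congr t h], fun F => ?_⟩
  set T : Set ℝ := {t : ℝ | HTmin t F t ≠ F t} with hT
  -- It suffices to show `T` is countable.
  suffices hC : T.Countable by
    exact hC.measure_zero volume
  -- Every point of `T` has a "successor bound": some `z > t` below every later point of `T`.
  have hex : ∀ t ∈ T, ∃ z : ℝ, t < z ∧ ∀ s ∈ T, t < s → z ≤ s := by
    intro t _
    by_cases hA : ∃ s, s ∈ T ∧ t < s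
    · obtain ⟨s1, hs1T, hs1t⟩ := hA
      set A : Set (ℝ → S) := (fun s => HTmin s F) '' {s | s ∈ T ∧ t < s} with hAdef
      have hAne : A.Nonempty := ⟨_, ⟨s1, ⟨hs1T, hs1t⟩, rfl⟩⟩
      obtain ⟨s0, hs0, hmin⟩ : ∃ s0, (s0 ∈ T ∧ t < s0) ∧ (HTwf S).min A hAne = HTmin s0 F := by
        obtain ⟨s0, hs0, h⟩ := (HTwf S).min_mem A hAne
        exact ⟨s0, hs0, h.symm⟩
      refine ⟨s0, hs0.2, ?_⟩
      intro s hsT hts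
      by_contra hlt
      push_neg at hlt
      have hr : HTrel S (HTmin s F) (HTmin s0 F) := HTmin_lt hsT hlt
      exact (HTwf S).not_lt_min A ⟨s, ⟨hsT, hts⟩, rfl⟩ (hmin ▸ hr)
    · exact ⟨t + 1, by linarith, fun s hs hts => absurd ⟨s, hs, hts⟩ hA⟩
  choose! y hy1 hy2 using hex
  -- The intervals `(t, y t)` for `t ∈ T` are pairwise disjoint nonempty open intervals.
  have key : ∀ a ∈ T, ∀ b ∈ T, a < b → Disjoint (Set.Ioo a (y a)) (Set.Ioo b (y b)) := by
    intro a ha b hb h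
    apply Set.disjoint_left.2
    intro x hxa hxb
    have hyb : y a ≤ b := hy2 a ha b hb h
    exact absurd (hxa.2.trans_le hyb) (not_lt.2 hxb.1.le)
  have hd : T.PairwiseDisjoint fun t => Set.Ioo t (y t) := by
    intro a ha b hb hab
    rcases hab.lt_or_gt with h | h
    · exact key a ha b hb h
    · exact (key b hb a ha h).symm
  exact hd.countable_of_Ioo fun t ht => hy1 t ht
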